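/- Let β > 0, d ≥ 1, let w ∈ ℝ^d be a unit vector and ξ ∈ ℝ^d. If X ~ N(ξ, I_{d×d}), then E[f'(⟨w, X⟩)] ≤ 8β e^{−2β|⟨w, ξ⟩| + 2β²}, where f'(x) = β(1 − tanh²(βx)). -/

import Mathlib

open MeasureTheory ProbabilityTheory Real
open scoped NNReal ENNReal RealInnerProductSpace

lemma pdf_mul_exp (μ t x : ℝ) :
    gaussianPDFReal μ 1 x * rexp (t * x)
      = rexp (t * μ + t ^ 2 / 2) * gaussianPDFReal (μ + t) 1 x := by
  simp only [gaussianPDFReal, NNReal.coe_one, mul_one]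
  rw [mul_assoc, ← Real.exp_add, mul_comm (rexp (t * μ + t ^ 2 / 2)), mul_assoc, ← Real.exp_add]
  congr 1
  ring_nf

lemma mgf_gauss (μ t : ℝ) :
    ∫ x, rexp (t * x) ∂(gaussianReal μ 1) = rexp (t * μ + t ^ 2 / 2) := by
  rw [gaussianReal_of_var_ne_zero μ one_ne_zero]
  have h : gaussianPDF μ 1 = fun x => ((gaussianPDFReal μ 1 x).toNNReal : ℝ≥0∞) := rfl
  rw [h, integral_withDensity_eq_integral_smul
    ((measurable_gaussianPDFReal μ 1).real_toNNReal) _]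
  have h2 : (fun x => (gaussianPDFReal μ 1 x).toNNReal • rexp (t * x))
      = fun x => rexp (t * μ + t ^ 2 / 2) * gaussianPDFReal (μ + t) 1 x := by
    ext x
    rw [NNReal.smul_def, smul_eq_mul, Real.coe_toNNReal _ (gaussianPDFReal_nonneg μ 1 x),
      pdf_mul_exp]
  rw [h2, integral_const_mul, integral_gaussianPDFReal_eq_one _ one_ne_zero, mul_one]

lemma integrable_exp_gauss (μ t : ℝ) :
    Integrable (fun x => rexp (t * x)) (gaussianReal μ 1) := by
  rw [gaussianReal_of_var_ne_zero μ one_ne_zero]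
  have h : gaussianPDF μ 1 = fun x => ((gaussianPDFReal μ 1 x).toNNReal : ℝ≥0∞) := rfl
  rw [h, integrable_withDensity_iff_integrable_smul
    ((measurable_gaussianPDFReal μ 1).real_toNNReal)]
  have h2 : (fun x => (gaussianPDFReal μ 1 x).toNNReal • rexp (t * x))
      = fun x => rexp (t * μ + t ^ 2 / 2) * gaussianPDFReal (μ + t) 1 x := by
    ext x
    rw [NNReal.smul_def, smul_eq_mul, Real.coe_toNNReal _ (gaussianPDFReal_nonneg μ 1 x),
      pdf_mul_exp]
  rw [h2]
  exact (integrable_gaussianPDFReal _ _).const_mul _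

lemma integrable_exp_pi (d : ℕ) (ξ w : Fin d → ℝ) (c : ℝ) :
    Integrable (fun x : Fin d → ℝ => rexp (c * ∑ i, w i * x i))
      (Measure.pi fun i => gaussianReal (ξ i) 1) := by
  have hfun : (fun x : Fin d → ℝ => rexp (c * ∑ i, w i * x i))
      = fun x => ∏ i, rexp (c * w i * x i) := by
    ext x
    rw [← Real.exp_sum, Finset.mul_sum]
    congr 1
    exact Finset.sum_congr rfl fun i _ => by ring
  rw [hfun]
  exact MeasureTheory.Integrable.fin_nat_prod (E := fun _ => ℝ)
    (μ := fun i => gaussianReal (ξ i) 1)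
    (f := fun i x => rexp (c * w i * x))
    (fun i => integrable_exp_gauss (ξ i) (c * w i))

lemma integral_exp_pi (d : ℕ) (ξ w : Fin d → ℝ) (c : ℝ) :
    ∫ x : Fin d → ℝ, rexp (c * ∑ i, w i * x i) ∂(Measure.pi fun i => gaussianReal (ξ i) 1)
      = rexp (c * ∑ i, w i * ξ i + c ^ 2 * (∑ i, w i ^ 2) / 2) := by
  have hfun : (fun x : Fin d → ℝ => rexp (c * ∑ i, w i * x i))
      = fun x => ∏ i, rexp (c * w i * x i) := by
    ext x
    rw [← Real.exp_sum, Finset.mul_sum]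
    congr 1
    exact Finset.sum_congr rfl fun i _ => by ring
  rw [hfun]
  have h := MeasureTheory.integral_fin_nat_prod_eq_prod (E := fun _ => ℝ)
    (μ := fun i => gaussianReal (ξ i) 1)
    (fun i x => rexp (c * w i * x))
  refine h.trans ?_
  calc (∏ i, ∫ x : ℝ, rexp (c * w i * x) ∂(gaussianReal (ξ i) 1))
      = ∏ i, rexp (c * w i * ξ i + (c * w i) ^ 2 / 2) :=
        Finset.prod_congr rfl fun i _ => mgf_gauss (ξ i) (c * w i)
    _ = rexp (∑ i, (c * w i * ξ i + (c * w i) ^ 2 / 2)) := (Real.exp_sum _ _).symm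
    _ = rexp (c * ∑ i, w i * ξ i + c ^ 2 * (∑ i, w i ^ 2) / 2) := by
        congr 1
        rw [Finset.sum_add_distrib, Finset.mul_sum, Finset.mul_sum, ← Finset.sum_div]
        congr 1
        · exact Finset.sum_congr rfl fun i _ => by ring
        · congr 1
          exact Finset.sum_congr rfl fun i _ => by ring

lemma tanh_sq_bound (u : ℝ) : 1 - Real.tanh u ^ 2 ≤ 4 * rexp (-(2 * |u|)) := by
  have hc : (0:ℝ) < Real.cosh u := Real.cosh_pos u
  have h1 : 1 - Real.tanh u ^ 2 = (Real.cosh u ^ 2)⁻¹ := by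
    rw [Real.tanh_eq_sinh_div_cosh, div_pow]
    field_simp
    exact Real.cosh_sq_sub_sinh_sq u
  have h2 : rexp |u| / 2 ≤ Real.cosh u := by
    rw [Real.cosh_eq]
    rcases abs_cases u with ⟨h, _⟩ | ⟨h, _⟩ <;> rw [h] <;>
      nlinarith [Real.exp_pos u, Real.exp_pos (-u)]
  have h3 : (rexp |u| / 2) ^ 2 ≤ Real.cosh u ^ 2 :=
    pow_le_pow_left₀ (by positivity) h2 2
  have h4 : ((rexp |u| / 2) ^ 2)⁻¹ = 4 * rexp (-(2 * |u|)) := by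
    rw [show -(2 * |u|) = -|u| + -|u| by ring, Real.exp_add, Real.exp_neg]
    field_simp
    ring_nf
  rw [h1, ← h4]
  exact inv_anti₀ (by positivity) h3

lemma one_sub_tanh_sq_nonneg (u : ℝ) : 0 ≤ 1 - Real.tanh u ^ 2 := by
  have hc : (0:ℝ) < Real.cosh u := Real.cosh_pos u
  rw [Real.tanh_eq_sinh_div_cosh, div_pow]
  have h : Real.sinh u ^ 2 / Real.cosh u ^ 2 ≤ 1 := by
    rw [div_le_one (by positivity)]
    nlinarith [Real.cosh_sq_sub_sinh_sq u]
  linarith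

lemma key_bound (β m t : ℝ) (hβ : 0 < β) :
    β * (1 - Real.tanh (β * t) ^ 2)
      ≤ 4 * β * rexp (-(2 * β * |m|)) *
        (rexp (-(2 * β * m)) * rexp (2 * β * t) + rexp (2 * β * m) * rexp (-(2 * β) * t)) := by
  calc β * (1 - Real.tanh (β * t) ^ 2)
      ≤ β * (4 * rexp (-(2 * |β * t|))) :=
        mul_le_mul_of_nonneg_left (tanh_sq_bound (β * t)) hβ.le
    _ = 4 * β * rexp (-(2 * β * |t|)) := by
        rw [abs_mul, abs_of_pos hβ]; ring
    _ ≤ 4 * β * (rexp (-(2 * β * |m|)) * rexp (2 * β * |t - m|)) := by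
        rw [← Real.exp_add]
        refine mul_le_mul_of_nonneg_left (Real.exp_le_exp.2 ?_) (by positivity)
        have h := abs_sub_abs_le_abs_sub m t
        rw [abs_sub_comm m t] at h
        nlinarith
    _ ≤ 4 * β * rexp (-(2 * β * |m|)) *
        (rexp (-(2 * β * m)) * rexp (2 * β * t) + rexp (2 * β * m) * rexp (-(2 * β) * t)) := by
        rw [← mul_assoc]
        refine mul_le_mul_of_nonneg_left ?_ (by positivity)
        rw [← Real.exp_add, ← Real.exp_add]
        rcases abs_cases (t - m) with ⟨h, _⟩ | ⟨h, _⟩ <;> rw [h]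
        · rw [show 2 * β * (t - m) = -(2 * β * m) + 2 * β * t by ring]
          exact le_add_of_nonneg_right (Real.exp_pos _).le
        · rw [show 2 * β * -(t - m) = 2 * β * m + -(2 * β) * t by ring]
          exact le_add_of_nonneg_left (Real.exp_pos _).le

noncomputable def gaussE (d : ℕ) (ξ : EuclideanSpace ℝ (Fin d)) (σ2 : ℝ≥0) :
    Measure (EuclideanSpace ℝ (Fin d)) :=
  (Measure.pi fun i : Fin d => gaussianReal (ξ i) σ2).map
    (MeasurableEquiv.toLp 2 (Fin d → ℝ))

theorem stmt1 (d : ℕ) (hd : 1 ≤ d) (β : ℝ) (hβ : 0 < β)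
    (w ξ : EuclideanSpace ℝ (Fin d)) (hw : ‖w‖ = 1) :
    (∫ x, β * (1 - Real.tanh (β * ⟪w, x⟫) ^ 2) ∂(gaussE d ξ 1))
      ≤ 8 * β * Real.exp (-(2 * β * |⟪w, ξ⟫|) + 2 * β ^ 2) := by
  have hm : ⟪w, ξ⟫ = ∑ i, w i * ξ i := by
    simp [PiLp.inner_apply, RCLike.inner_apply, conj_trivial, mul_comm]
  set m : ℝ := ⟪w, ξ⟫ with hm_def
  have hsum : (∑ i, w i ^ 2) = 1 := by
    have h := real_inner_self_eq_norm_sq w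
    rw [hw] at h
    simp only [PiLp.inner_apply, RCLike.inner_apply, conj_trivial] at h
    rw [one_pow] at h
    rw [← h]
    exact Finset.sum_congr rfl fun i _ => sq (w i)
  rw [gaussE, MeasureTheory.integral_map_equiv]
  have hinner : ∀ x : Fin d → ℝ,
      ⟪w, MeasurableEquiv.toLp 2 (Fin d → ℝ) x⟫ = ∑ i, w i * x i := fun x => by
    simp [PiLp.inner_apply, RCLike.inner_apply, conj_trivial,
      MeasurableEquiv.toLp_apply, mul_comm]
  simp only [hinner]
  set μpi := Measure.pi fun i : Fin d => gaussianReal (ξ i) 1 with hμpi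
  have hInt1 : Integrable (fun x : Fin d → ℝ => rexp (2 * β * ∑ i, w i * x i)) μpi :=
    integrable_exp_pi d ξ w (2 * β)
  have hInt2 : Integrable (fun x : Fin d → ℝ => rexp (-(2 * β) * ∑ i, w i * x i)) μpi :=
    integrable_exp_pi d ξ w (-(2 * β))
  have hG : Integrable (fun x : Fin d → ℝ =>
      4 * β * rexp (-(2 * β * |m|)) *
        (rexp (-(2 * β * m)) * rexp (2 * β * ∑ i, w i * x i)
          + rexp (2 * β * m) * rexp (-(2 * β) * ∑ i, w i * x i))) μpi :=
    ((hInt1.const_mul _).add (hInt2.const_mul _)).const_mul _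
  have hf : Integrable (fun x : Fin d → ℝ =>
      β * (1 - Real.tanh (β * ∑ i, w i * x i) ^ 2)) μpi := by
    refine hG.mono ?_ (ae_of_all _ fun x => ?_)
    · refine Continuous.aestronglyMeasurable ?_
      have hS : Continuous fun x : Fin d → ℝ => β * ∑ i, w i * x i := by fun_prop
      have htanh : Continuous Real.tanh := by
        rw [show Real.tanh = fun x => Real.sinh x / Real.cosh x from
          funext Real.tanh_eq_sinh_div_cosh]
        exact Real.continuous_sinh.div Real.continuous_cosh fun x => (Real.cosh_pos x).ne'
      exact continuous_const.mul
        (continuous_const.sub ((htanh.comp hS).pow 2))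
    · have hfx : (0:ℝ) ≤ β * (1 - Real.tanh (β * ∑ i, w i * x i) ^ 2) :=
        mul_nonneg hβ.le (one_sub_tanh_sq_nonneg _)
      simp only [Real.norm_eq_abs, abs_of_nonneg hfx]
      exact le_trans (key_bound β m _ hβ) (le_abs_self _)
  calc (∫ x : Fin d → ℝ, β * (1 - Real.tanh (β * ∑ i, w i * x i) ^ 2) ∂μpi)
      ≤ ∫ x : Fin d → ℝ, 4 * β * rexp (-(2 * β * |m|)) *
          (rexp (-(2 * β * m)) * rexp (2 * β * ∑ i, w i * x i)
            + rexp (2 * β * m) * rexp (-(2 * β) * ∑ i, w i * x i)) ∂μpi :=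
        integral_mono hf hG fun x => key_bound β m _ hβ
    _ = 8 * β * rexp (-(2 * β * |m|) + 2 * β ^ 2) := by
        rw [integral_const_mul, integral_add (hInt1.const_mul _) (hInt2.const_mul _),
          integral_const_mul, integral_const_mul,
          integral_exp_pi d ξ w (2 * β), integral_exp_pi d ξ w (-(2 * β)), ← hm, hsum]
        rw [← Real.exp_add, ← Real.exp_add,
          show -(2 * β * m) + (2 * β * m + (2 * β) ^ 2 * 1 / 2) = 2 * β ^ 2 by ring,
          show 2 * β * m + (-(2 * β) * m + (-(2 * β)) ^ 2 * 1 / 2) = 2 * β ^ 2 by ring,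
          Real.exp_add]
        ring
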